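/- arXiv:2212.05257 — 4 statements merged into one kernel-verified Lean document; each statement's English description precedes it below -/
import Mathlib

section
/- There exists a constant C' ≥ 0, depending only on L_A, C, α and β, such that for a.e. t ∈ [0,T] and all x, v ∈ V: ⟨A(t,x), x − v⟩ ≤ −(L_A/2)‖x‖_V^β + C' a(t)(1 + ‖x‖_H²) + C'(1 + ‖x‖_H^{α(β−1)})‖v‖_V^β. -/
open MeasureTheory Filter Topology

set_option maxHeartbeats 1000000 in
/-- Under the coercivity (H.3) and growth (H.4) hypotheses, there is a constant
`C' ≥ 0` such that for a.e. `t ∈ [0,T]` and all `x, v ∈ V`: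
`⟨A(t,x), x − v⟩ ≤ −(L_A/2)‖x‖_V^β + C' a(t)(1 + ‖x‖_H²) + C'(1 + ‖x‖_H^{α(β−1)})‖v‖_V^β`. -/
theorem statement1 {V H : Type*}
    [NormedAddCommGroup V] [NormedSpace ℝ V]
    [NormedAddCommGroup H] [InnerProductSpace ℝ H]
    -- the continuous dense embedding `V ⊂ H` of the Gelfand triple
    (i : V →L[ℝ] H) (hi_inj : Function.Injective i) (hi_dense : DenseRange i)
    (T : ℝ) (hT : 0 < T) (β : ℝ) (hβ : 1 < β)
    (a : ℝ → ℝ) (ha_nonneg : ∀ t, 0 ≤ a t) (ha_int : IntegrableOn a (Set.Icc 0 T))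
    (A : ℝ → V → StrongDual ℝ V)
    (L_A : ℝ) (hLA : 0 < L_A) (α C : ℝ) (hα : 0 ≤ α) (hC : 0 < C)
    -- (H.3) coercivity
    (hH3 : ∀ᵐ t ∂(volume.restrict (Set.Icc (0:ℝ) T)), ∀ x : V,
      (A t x) x ≤ a t * (1 + ‖i x‖ ^ 2) - L_A * ‖x‖ ^ β)
    -- (H.4) growth
    (hH4 : ∀ᵐ t ∂(volume.restrict (Set.Icc (0:ℝ) T)), ∀ x : V,
      ‖A t x‖ ^ (β / (β - 1)) ≤ (a t + C * ‖x‖ ^ β) * (1 + ‖i x‖ ^ α)) :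
    ∃ C' : ℝ, 0 ≤ C' ∧
      ∀ᵐ t ∂(volume.restrict (Set.Icc (0:ℝ) T)), ∀ x v : V,
        (A t x) (x - v) ≤ -(L_A / 2) * ‖x‖ ^ β + C' * a t * (1 + ‖i x‖ ^ 2)
          + C' * (1 + ‖i x‖ ^ (α * (β - 1))) * ‖v‖ ^ β := by
  have hβ1 : 0 < β - 1 := sub_pos.2 hβ
  have hβ0 : (0:ℝ) < β := lt_trans one_pos hβ
  set γ := β / (β - 1) with hγdef
  have hconj : γ.HolderConjugate β := (Real.HolderConjugate.conjExponent hβ).symm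
  have hγ0 : 0 < γ := hconj.pos
  set ε0 := L_A / (2 * C) with hε0def
  have hε0 : 0 < ε0 := div_pos hLA (by linarith)
  have hγε0 : 0 < γ * ε0 := mul_pos hγ0 hε0
  set K0 := (γ * ε0) ^ (1 - β) / β with hK0def
  have hK0 : 0 < K0 := div_pos (Real.rpow_pos_of_pos hγε0 _) hβ0
  set K := K0 * 2 ^ (β - 1) with hKdef
  have hK : 0 < K := mul_pos hK0 (Real.rpow_pos_of_pos two_pos _)
  refine ⟨max (1 + ε0) K, le_max_of_le_left (by linarith), ?_⟩
  filter_upwards [hH3, hH4] with t h3 h4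
  intro x v
  set s := ‖i x‖ with hs
  have hs0 : (0:ℝ) ≤ s := norm_nonneg _
  have hsα : (0:ℝ) ≤ s ^ α := Real.rpow_nonneg hs0 _
  have h1sα : (0:ℝ) < 1 + s ^ α := by linarith
  set P := ‖A t x‖ with hP
  set Q := ‖v‖ with hQ
  have hP0 : (0:ℝ) ≤ P := norm_nonneg _
  have hQ0 : (0:ℝ) ≤ Q := norm_nonneg _
  set ε := ε0 / (1 + s ^ α) with hεdef
  have hεpos : 0 < ε := div_pos hε0 h1sα
  have hγε : 0 < γ * ε := mul_pos hγ0 hεpos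
  set d := (γ * ε) ^ (1/γ) with hddef
  have hd0 : 0 < d := Real.rpow_pos_of_pos hγε _
  have hdγ : d ^ γ = γ * ε := by
    rw [hddef, ← Real.rpow_mul hγε.le, one_div_mul_cancel hγ0.ne', Real.rpow_one]
  have hβγ : β / γ = β - 1 := hconj.symm.div_conj_eq_sub_one
  have hdβ : d ^ β = (γ * ε0) ^ (β - 1) / (1 + s ^ α) ^ (β - 1) := by
    rw [hddef, ← Real.rpow_mul hγε.le, one_div_mul_eq_div, hβγ]
    rw [show γ * ε = (γ * ε0) / (1 + s ^ α) by rw [hεdef]; ring]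
    exact Real.div_rpow hγε0.le h1sα.le _
  -- weighted Young inequality
  have young := Real.young_inequality_of_nonneg (mul_nonneg hd0.le hP0)
    (div_nonneg hQ0 hd0.le) hconj
  have e1 : (d * P) ^ γ / γ = ε * P ^ γ := by
    rw [Real.mul_rpow hd0.le hP0, hdγ]
    field_simp
  have e2 : (Q / d) ^ β / β = K0 * (1 + s ^ α) ^ (β - 1) * Q ^ β := by
    have hne1 : ((γ * ε0) ^ (β - 1) : ℝ) ≠ 0 := (Real.rpow_pos_of_pos hγε0 _).ne'
    have hne2 : ((1 + s ^ α) ^ (β - 1) : ℝ) ≠ 0 := (Real.rpow_pos_of_pos h1sα _).ne'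
    rw [Real.div_rpow hQ0 hd0.le, hdβ, hK0def,
      show (1 - β : ℝ) = -(β - 1) by ring, Real.rpow_neg hγε0.le]
    field_simp
  have hPQ : P * Q ≤ ε * P ^ γ + K0 * (1 + s ^ α) ^ (β - 1) * Q ^ β := by
    calc P * Q = (d * P) * (Q / d) := by field_simp
    _ ≤ (d * P) ^ γ / γ + (Q / d) ^ β / β := young
    _ = ε * P ^ γ + K0 * (1 + s ^ α) ^ (β - 1) * Q ^ β := by rw [e1, e2]
  -- absorb the P^γ term using (H.4)
  have hεP : ε * P ^ γ ≤ ε0 * a t + (L_A / 2) * ‖x‖ ^ β := by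
    have h4' := h4 x
    have hXβ : (0:ℝ) ≤ ‖x‖ ^ β := Real.rpow_nonneg (norm_nonneg _) _
    have step : ε * P ^ γ ≤ ε * ((a t + C * ‖x‖ ^ β) * (1 + s ^ α)) :=
      mul_le_mul_of_nonneg_left h4' hεpos.le
    have eq1 : ε * ((a t + C * ‖x‖ ^ β) * (1 + s ^ α)) = ε0 * (a t + C * ‖x‖ ^ β) := by
      rw [hεdef]; field_simp
    have eq2 : ε0 * C = L_A / 2 := by
      rw [hε0def]; field_simp
    calc ε * P ^ γ ≤ ε0 * (a t + C * ‖x‖ ^ β) := by rw [← eq1]; exact step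
    _ = ε0 * a t + (ε0 * C) * ‖x‖ ^ β := by ring
    _ = ε0 * a t + (L_A / 2) * ‖x‖ ^ β := by rw [eq2]
  -- bound the weight power
  have hsαβ : (0:ℝ) ≤ s ^ (α * (β - 1)) := Real.rpow_nonneg hs0 _
  have hpow : (1 + s ^ α) ^ (β - 1) ≤ 2 ^ (β - 1) * (1 + s ^ (α * (β - 1))) := by
    rcases le_total s 1 with hle | hle
    · have h1 : s ^ α ≤ 1 := Real.rpow_le_one hs0 hle hα
      have h2 : (1 + s ^ α : ℝ) ^ (β - 1) ≤ 2 ^ (β - 1) :=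
        Real.rpow_le_rpow (by linarith) (by linarith) hβ1.le
      have h3 : (1:ℝ) * 2 ^ (β - 1) ≤ (1 + s ^ (α * (β - 1))) * 2 ^ (β - 1) :=
        mul_le_mul_of_nonneg_right (by linarith) (Real.rpow_nonneg (by norm_num) _)
      linarith [h2, h3]
    · have h1 : (1:ℝ) ≤ s ^ α := Real.one_le_rpow hle hα
      have h2 : (1 + s ^ α : ℝ) ^ (β - 1) ≤ (2 * s ^ α) ^ (β - 1) :=
        Real.rpow_le_rpow (by linarith) (by linarith) hβ1.le
      have h3 : (2 * s ^ α : ℝ) ^ (β - 1) = 2 ^ (β - 1) * s ^ (α * (β - 1)) := by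
        rw [Real.mul_rpow (by norm_num) hsα, ← Real.rpow_mul hs0]
      have h4 : (0:ℝ) ≤ 2 ^ (β - 1) := Real.rpow_nonneg (by norm_num) _
      calc (1 + s ^ α : ℝ) ^ (β - 1) ≤ 2 ^ (β - 1) * s ^ (α * (β - 1)) := by rw [← h3]; exact h2
      _ ≤ 2 ^ (β - 1) * (1 + s ^ (α * (β - 1))) :=
        mul_le_mul_of_nonneg_left (by linarith) h4
  -- assemble
  have hA3 := h3 x
  have hAv : -((A t x) v) ≤ P * Q := by
    have h := (A t x).le_opNorm v
    rw [Real.norm_eq_abs] at h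
    have h2 := neg_abs_le ((A t x) v)
    exact le_trans (by linarith) h
  have hQβ : (0:ℝ) ≤ Q ^ β := Real.rpow_nonneg hQ0 _
  have hs2 : (0:ℝ) ≤ s ^ 2 := sq_nonneg s
  have hat : 0 ≤ a t := ha_nonneg t
  have hmax1 : (1 + ε0 : ℝ) ≤ max (1 + ε0) K := le_max_left _ _
  have hmaxK : K ≤ max (1 + ε0) K := le_max_right _ _
  have hweight : K0 * (1 + s ^ α) ^ (β - 1) * Q ^ β
      ≤ max (1 + ε0) K * (1 + s ^ (α * (β - 1))) * Q ^ β := by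
    have step1 : K0 * (1 + s ^ α) ^ (β - 1) ≤ K0 * (2 ^ (β - 1) * (1 + s ^ (α * (β - 1)))) :=
      mul_le_mul_of_nonneg_left hpow hK0.le
    have step2 : K0 * (2 ^ (β - 1) * (1 + s ^ (α * (β - 1))))
        = K * (1 + s ^ (α * (β - 1))) := by rw [hKdef]; ring
    have step3 : K * (1 + s ^ (α * (β - 1))) ≤ max (1 + ε0) K * (1 + s ^ (α * (β - 1))) :=
      mul_le_mul_of_nonneg_right hmaxK (by linarith)
    have := (step1.trans_eq step2).trans step3
    exact mul_le_mul_of_nonneg_right this hQβ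
  have hacoef : (1 + ε0) * a t * (1 + s ^ 2) ≤ max (1 + ε0) K * a t * (1 + s ^ 2) := by
    have := mul_le_mul_of_nonneg_right hmax1 hat
    exact mul_le_mul_of_nonneg_right this (by linarith)
  calc (A t x) (x - v) = (A t x) x + -((A t x) v) := by rw [map_sub]; ring
  _ ≤ (a t * (1 + s ^ 2) - L_A * ‖x‖ ^ β) + P * Q := add_le_add hA3 hAv
  _ ≤ (a t * (1 + s ^ 2) - L_A * ‖x‖ ^ β)
      + (ε0 * a t + (L_A / 2) * ‖x‖ ^ β + K0 * (1 + s ^ α) ^ (β - 1) * Q ^ β) := by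
      have := hPQ.trans (add_le_add_left hεP _)
      linarith
  _ ≤ -(L_A / 2) * ‖x‖ ^ β + (1 + ε0) * a t * (1 + s ^ 2)
      + K0 * (1 + s ^ α) ^ (β - 1) * Q ^ β := by
      have hkey : 0 ≤ ε0 * (a t * s ^ 2) := mul_nonneg hε0.le (mul_nonneg hat hs2)
      linarith [hkey]
  _ ≤ -(L_A / 2) * ‖x‖ ^ β + max (1 + ε0) K * a t * (1 + s ^ 2)
      + max (1 + ε0) K * (1 + s ^ (α * (β - 1))) * Q ^ β :=
    add_le_add (add_le_add le_rfl hacoef) hweight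
end

section
/- Let Υ > 0, p > 0 and p' ∈ (0,p]. For every h ∈ 𝓗_p with ∫_{Z_T} h^{p'} dν_T < ∞, one has sup_{g ∈ S^Υ} ∫_{Z_T} h(ζ)^{p'} (g(ζ) + 1) ν_T(dζ) < ∞. -/
open MeasureTheory Filter Topology
open scoped ENNReal

/-- The set `S^Υ` of nonnegative measurable functions `g` on `(Z_T, ν_T)` with
`∫ ℓ(g) dν_T ≤ Υ`, where `ℓ(r) = r log r − r + 1`. -/
def entS {X : Type*} [MeasurableSpace X] (μ : Measure X) (Υ : ℝ) : Set (X → ℝ) :=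
  {g | Measurable g ∧ (∀ x, 0 ≤ g x) ∧
    ∫⁻ x, ENNReal.ofReal (g x * Real.log (g x) - g x + 1) ∂μ ≤ ENNReal.ofReal Υ}

/-- The class `𝓗_p`: nonnegative measurable `h` on `(Z_T, ν_T)` such that for some `δ > 0`,
`∫_E exp(δ h^p) dν_T < ∞` for every measurable `E` with `ν_T(E) < ∞`. -/
def memHp {X : Type*} [MeasurableSpace X] (μ : Measure X) (p : ℝ) (h : X → ℝ) : Prop :=
  Measurable h ∧ (∀ x, 0 ≤ h x) ∧
    ∃ δ > (0:ℝ), ∀ E : Set X, MeasurableSet E → μ E < ∞ →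
      ∫⁻ x in E, ENNReal.ofReal (Real.exp (δ * h x ^ p)) ∂μ < ∞

lemma young' (s t : ℝ) (ht : 0 ≤ t) :
    s * t ≤ Real.exp s + (t * Real.log t - t + 1) := by
  rcases eq_or_lt_of_le ht with h0 | h0
  · rw [← h0]; simp; positivity
  · have h1 : s - Real.log t + 1 ≤ Real.exp (s - Real.log t) := Real.add_one_le_exp _
    have h2 : t * (s - Real.log t + 1) ≤ t * Real.exp (s - Real.log t) :=
      mul_le_mul_of_nonneg_left h1 ht
    have h3 : t * Real.exp (s - Real.log t) = Real.exp s := by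
      rw [Real.exp_sub, Real.exp_log h0]; field_simp
    nlinarith [Real.exp_pos s]

lemma le_ell' (t : ℝ) (ht : 0 ≤ t) :
    t ≤ (t * Real.log t - t + 1) + Real.exp 2 := by
  have := young' 2 t ht
  linarith

lemma ell_nonneg' (t : ℝ) (ht : 0 ≤ t) : 0 ≤ t * Real.log t - t + 1 := by
  rcases eq_or_lt_of_le ht with h0 | h0
  · rw [← h0]; simp
  · have h1 := Real.log_le_sub_one_of_pos (x := t⁻¹) (by positivity)
    rw [Real.log_inv] at h1
    have h2 : t * (-Real.log t) ≤ t * (t⁻¹ - 1) := mul_le_mul_of_nonneg_left h1 ht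
    rw [mul_sub, mul_inv_cancel₀ h0.ne'] at h2
    nlinarith


/-- for `h ∈ 𝓗_p ∩ L^{p'}(ν_T)` with `0 < p' ≤ p`,
`sup_{g ∈ S^Υ} ∫ h^{p'} (g + 1) dν_T < ∞`. -/
theorem statement4 {X : Type*} [MeasurableSpace X] (νT : Measure X) [SigmaFinite νT]
    (Υ p p' : ℝ) (hΥ : 0 < Υ) (hp : 0 < p) (hp'₀ : 0 < p') (hp'p : p' ≤ p)
    (h : X → ℝ) (hHp : memHp νT p h)
    (hLp' : ∫⁻ x, ENNReal.ofReal (h x ^ p') ∂νT < ∞) :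
    (⨆ g ∈ entS νT Υ, ∫⁻ x, ENNReal.ofReal (h x ^ p' * (g x + 1)) ∂νT) < ∞ := by
  obtain ⟨hme, hnn, δ, hδ, hδint⟩ := hHp
  set δ' : ℝ := min δ 1 with hδ'def
  have hδ'0 : 0 < δ' := lt_min hδ one_pos
  set A : Set X := {x | 1 ≤ h x} with hAdef
  have hAm : MeasurableSet A := measurableSet_le measurable_const hme
  have hrp'me : Measurable fun x => h x ^ p' :=
    (Real.continuous_rpow_const hp'₀.le).measurable.comp hme
  have hrpme : Measurable fun x => h x ^ p :=
    (Real.continuous_rpow_const hp.le).measurable.comp hme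
  have hexpme : Measurable fun x => ENNReal.ofReal (Real.exp (δ * h x ^ p)) :=
    (Real.measurable_exp.comp (hrpme.const_mul δ)).ennreal_ofReal
  have hhp'me : Measurable fun x => ENNReal.ofReal (h x ^ p') :=
    hrp'me.ennreal_ofReal
  set L : ℝ≥0∞ := ∫⁻ x, ENNReal.ofReal (h x ^ p') ∂νT with hLdef
  -- A has finite measure
  have hνA : νT A < ∞ := by
    have h1 : νT A = ∫⁻ _ in A, 1 ∂νT := (setLIntegral_one A).symm
    have h2 : (∫⁻ _ in A, 1 ∂νT) ≤ ∫⁻ x in A, ENNReal.ofReal (h x ^ p') ∂νT := by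
      refine setLIntegral_mono hhp'me fun x hx => ?_
      have hx1 : (1:ℝ) ≤ h x := hx
      have : (1:ℝ) ≤ h x ^ p' := Real.one_le_rpow hx1 hp'₀.le
      simpa using ENNReal.one_le_ofReal.mpr this
    have h3 : (∫⁻ x in A, ENNReal.ofReal (h x ^ p') ∂νT) ≤ L :=
      setLIntegral_le_lintegral _ _
    exact lt_of_le_of_lt (h1 ▸ h2.trans h3) hLp'
  set CA : ℝ≥0∞ := ∫⁻ x in A, ENNReal.ofReal (Real.exp (δ * h x ^ p)) ∂νT with hCAdef
  have hCA : CA < ∞ := hδint A hAm hνA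
  set KA : ℝ≥0∞ := ENNReal.ofReal (1/δ') * CA + ENNReal.ofReal (1/δ') * ENNReal.ofReal Υ + L
    with hKAdef
  set KB : ℝ≥0∞ := ENNReal.ofReal Υ + ENNReal.ofReal (Real.exp 2 + 1) * L with hKBdef
  have hK : KA + KB < ∞ := by
    have h1 : ENNReal.ofReal (1/δ') * CA < ∞ := ENNReal.mul_lt_top ENNReal.ofReal_lt_top hCA
    have h2 : ENNReal.ofReal (Real.exp 2 + 1) * L < ∞ :=
      ENNReal.mul_lt_top ENNReal.ofReal_lt_top hLp'
    have h3 : ENNReal.ofReal (1/δ') * ENNReal.ofReal Υ < ∞ :=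
      ENNReal.mul_lt_top ENNReal.ofReal_lt_top ENNReal.ofReal_lt_top
    have := hLp'
    rw [hKAdef, hKBdef]
    exact ENNReal.add_lt_top.mpr ⟨ENNReal.add_lt_top.mpr
      ⟨ENNReal.add_lt_top.mpr ⟨h1, h3⟩, hLp'⟩, ENNReal.add_lt_top.mpr ⟨ENNReal.ofReal_lt_top, h2⟩⟩
  refine lt_of_le_of_lt (iSup₂_le fun g hg => ?_) hK
  obtain ⟨hgme, hgnn, hgΥ⟩ := hg
  have hℓme : Measurable fun x => ENNReal.ofReal (g x * Real.log (g x) - g x + 1) :=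
    (((hgme.mul (Real.measurable_log.comp hgme)).sub hgme).add measurable_const).ennreal_ofReal
  have hℓΥ : ∀ s : Set X,
      (∫⁻ x in s, ENNReal.ofReal (g x * Real.log (g x) - g x + 1) ∂νT) ≤ ENNReal.ofReal Υ :=
    fun s => (setLIntegral_le_lintegral _ _).trans hgΥ
  rw [← lintegral_add_compl (μ := νT)
    (f := fun x => ENNReal.ofReal (h x ^ p' * (g x + 1))) hAm]
  refine add_le_add ?_ ?_
  · -- bound on A
    have hpt : ∀ x ∈ A, ENNReal.ofReal (h x ^ p' * (g x + 1)) ≤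
        ENNReal.ofReal (1/δ') * ENNReal.ofReal (Real.exp (δ * h x ^ p))
        + (ENNReal.ofReal (1/δ') * ENNReal.ofReal (g x * Real.log (g x) - g x + 1)
          + ENNReal.ofReal (h x ^ p')) := by
      intro x hx
      have hx1 : (1:ℝ) ≤ h x := hx
      have h0p' : (0:ℝ) ≤ h x ^ p' := Real.rpow_nonneg (hnn x) _
      have hℓ0 : 0 ≤ g x * Real.log (g x) - g x + 1 := ell_nonneg' _ (hgnn x)
      have hrp : h x ^ p' ≤ h x ^ p := Real.rpow_le_rpow_of_exponent_le hx1 hp'p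
      have hee : Real.exp (δ' * h x ^ p') ≤ Real.exp (δ * h x ^ p) := by
        apply Real.exp_le_exp.mpr
        calc δ' * h x ^ p' ≤ δ * h x ^ p' :=
              mul_le_mul_of_nonneg_right (min_le_left _ _) h0p'
          _ ≤ δ * h x ^ p := mul_le_mul_of_nonneg_left hrp hδ.le
      have hy := young' (δ' * h x ^ p') (g x) (hgnn x)
      have key : h x ^ p' * g x ≤ (1/δ') * Real.exp (δ * h x ^ p)
          + (1/δ') * (g x * Real.log (g x) - g x + 1) := by
        have h2 : δ' * (h x ^ p' * g x) ≤
            Real.exp (δ * h x ^ p) + (g x * Real.log (g x) - g x + 1) := by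
          nlinarith
        have h3 := mul_le_mul_of_nonneg_left h2 (by positivity : (0:ℝ) ≤ 1/δ')
        calc h x ^ p' * g x = (1/δ') * (δ' * (h x ^ p' * g x)) := by field_simp
          _ ≤ (1/δ') * (Real.exp (δ * h x ^ p) + (g x * Real.log (g x) - g x + 1)) := h3
          _ = _ := by ring
      rw [← ENNReal.ofReal_mul (by positivity), ← ENNReal.ofReal_mul (by positivity)]
      calc ENNReal.ofReal (h x ^ p' * (g x + 1))
          ≤ ENNReal.ofReal ((1/δ') * Real.exp (δ * h x ^ p)
              + ((1/δ') * (g x * Real.log (g x) - g x + 1) + h x ^ p')) := by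
            apply ENNReal.ofReal_le_ofReal; nlinarith
        _ ≤ _ := le_trans ENNReal.ofReal_add_le (add_le_add le_rfl ENNReal.ofReal_add_le)
    have hup : Measurable fun x =>
        ENNReal.ofReal (1/δ') * ENNReal.ofReal (Real.exp (δ * h x ^ p))
        + (ENNReal.ofReal (1/δ') * ENNReal.ofReal (g x * Real.log (g x) - g x + 1)
          + ENNReal.ofReal (h x ^ p')) := by
      exact (measurable_const.mul hexpme).add ((measurable_const.mul hℓme).add hhp'me)
    calc (∫⁻ x in A, ENNReal.ofReal (h x ^ p' * (g x + 1)) ∂νT)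
        ≤ ∫⁻ x in A, (ENNReal.ofReal (1/δ') * ENNReal.ofReal (Real.exp (δ * h x ^ p))
            + (ENNReal.ofReal (1/δ') * ENNReal.ofReal (g x * Real.log (g x) - g x + 1)
              + ENNReal.ofReal (h x ^ p'))) ∂νT := setLIntegral_mono hup hpt
      _ = (∫⁻ x in A, ENNReal.ofReal (1/δ')
              * ENNReal.ofReal (Real.exp (δ * h x ^ p)) ∂νT)
          + ((∫⁻ x in A, ENNReal.ofReal (1/δ')
              * ENNReal.ofReal (g x * Real.log (g x) - g x + 1) ∂νT)
            + ∫⁻ x in A, ENNReal.ofReal (h x ^ p') ∂νT) := by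
          rw [lintegral_add_left (f := fun x => ENNReal.ofReal (1/δ') * ENNReal.ofReal (Real.exp (δ * h x ^ p))) (measurable_const.mul hexpme),
            lintegral_add_left (f := fun x => ENNReal.ofReal (1/δ') * ENNReal.ofReal (g x * Real.log (g x) - g x + 1)) (measurable_const.mul hℓme)]
      _ ≤ KA := by
          rw [hKAdef, add_assoc]
          refine add_le_add ?_ (add_le_add ?_ (setLIntegral_le_lintegral _ _))
          · rw [lintegral_const_mul _ hexpme]
          · rw [lintegral_const_mul _ hℓme]
            exact mul_le_mul_right (hℓΥ A) _
  · -- bound on Aᶜ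
    have hpt : ∀ x ∈ Aᶜ, ENNReal.ofReal (h x ^ p' * (g x + 1)) ≤
        ENNReal.ofReal (g x * Real.log (g x) - g x + 1)
        + ENNReal.ofReal (Real.exp 2 + 1) * ENNReal.ofReal (h x ^ p') := by
      intro x hx
      have hx1 : h x < 1 := lt_of_not_ge hx
      have h0p' : (0:ℝ) ≤ h x ^ p' := Real.rpow_nonneg (hnn x) _
      have hle1 : h x ^ p' ≤ 1 := Real.rpow_le_one (hnn x) hx1.le hp'₀.le
      have hℓ0 : 0 ≤ g x * Real.log (g x) - g x + 1 := ell_nonneg' _ (hgnn x)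
      have hge := le_ell' (g x) (hgnn x)
      have key : h x ^ p' * (g x + 1) ≤ (g x * Real.log (g x) - g x + 1)
          + (Real.exp 2 + 1) * h x ^ p' := by
        have h1 : h x ^ p' * g x ≤ h x ^ p' * ((g x * Real.log (g x) - g x + 1) + Real.exp 2) :=
          mul_le_mul_of_nonneg_left hge h0p'
        have h2 : h x ^ p' * (g x * Real.log (g x) - g x + 1) ≤
            g x * Real.log (g x) - g x + 1 := by
          nlinarith
        nlinarith
      rw [← ENNReal.ofReal_mul (by positivity)]
      exact le_trans (ENNReal.ofReal_le_ofReal key) ENNReal.ofReal_add_le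
    have hup : Measurable fun x => ENNReal.ofReal (g x * Real.log (g x) - g x + 1)
        + ENNReal.ofReal (Real.exp 2 + 1) * ENNReal.ofReal (h x ^ p') :=
      hℓme.add (measurable_const.mul hhp'me)
    calc (∫⁻ x in Aᶜ, ENNReal.ofReal (h x ^ p' * (g x + 1)) ∂νT)
        ≤ ∫⁻ x in Aᶜ, (ENNReal.ofReal (g x * Real.log (g x) - g x + 1)
            + ENNReal.ofReal (Real.exp 2 + 1) * ENNReal.ofReal (h x ^ p')) ∂νT :=
          setLIntegral_mono hup hpt
      _ = (∫⁻ x in Aᶜ, ENNReal.ofReal (g x * Real.log (g x) - g x + 1) ∂νT)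
          + ∫⁻ x in Aᶜ, ENNReal.ofReal (Real.exp 2 + 1) * ENNReal.ofReal (h x ^ p') ∂νT := by
          rw [lintegral_add_left hℓme]
      _ ≤ KB := by
          rw [hKBdef]
          refine add_le_add (hℓΥ _) ?_
          rw [lintegral_const_mul _ hhp'me]
          exact mul_le_mul_right (setLIntegral_le_lintegral _ _) _
end

section
/- Fix Υ > 0. For every ε > 0 there exists a compact set K_ε ⊂ Z such that sup_{g ∈ S^Υ} ∫₀^T ∫_{Z∖K_ε} |h(s,z)| |g(s,z) − 1| ν(dz) ds ≤ ε. -/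
open MeasureTheory Filter Topology
open scoped ENNReal

/-- The measure `λ_T ⊗ ν` on `Z_T = [0,T] × Z`. -/
noncomputable def nuT {Z : Type*} [MeasurableSpace Z] (T : ℝ) (ν : Measure Z) :
    Measure (ℝ × Z) := (volume.restrict (Set.Icc 0 T)).prod ν

/-- Young-type inequality: `a b ≤ ℓ(b) + (e^a − 1)`. -/
theorem st9_young (a b : ℝ) (hb : 0 ≤ b) :
    a * b ≤ (b * Real.log b - b + 1) + (Real.exp a - 1) := by
  rcases eq_or_lt_of_le hb with hb0 | hb0
  · simp [← hb0]; positivity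
  · have h1 : a - Real.log b + 1 ≤ Real.exp (a - Real.log b) := Real.add_one_le_exp _
    have h2 : b * (a - Real.log b + 1) ≤ b * Real.exp (a - Real.log b) :=
      mul_le_mul_of_nonneg_left h1 hb
    have h3 : b * Real.exp (a - Real.log b) = Real.exp a := by
      rw [Real.exp_sub, Real.exp_log hb0]; field_simp
    nlinarith

theorem st9_ell_nonneg (b : ℝ) (hb : 0 ≤ b) : 0 ≤ b * Real.log b - b + 1 := by
  have := st9_young 0 b hb; simpa using this

theorem st9_exp_quad (y : ℝ) (hy : 0 ≤ y) : Real.exp y - 1 - y ≤ y ^ 2 * Real.exp y := by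
  have h1 : -y + 1 ≤ Real.exp (-y) := Real.add_one_le_exp _
  have h2 : Real.exp (-y) * Real.exp y = 1 := by rw [← Real.exp_add]; simp
  have h3 : 0 < Real.exp y := Real.exp_pos y
  nlinarith [mul_le_mul_of_nonneg_left h1 hy, mul_le_mul_of_nonneg_right h1 h3.le]

theorem st9_sq_le_ell (r : ℝ) (h0 : 0 ≤ r) (h1 : r ≤ 1) :
    (1 - r) ^ 2 ≤ 2 * (r * Real.log r - r + 1) := by
  set f : ℝ → ℝ := fun x => x * Real.log x - x + 1 - (1 - x) ^ 2 / 2 with hf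
  have hcont : ContinuousOn f (Set.Icc 0 1) := by
    apply ContinuousOn.sub
    · exact (Real.continuous_mul_log.continuousOn.sub continuousOn_id).add continuousOn_const
    · fun_prop
  have hderiv : ∀ x ∈ interior (Set.Icc (0:ℝ) 1), HasDerivAt f (Real.log x + 1 - x) x := by
    intro x hx
    rw [interior_Icc] at hx
    have hx0 : x ≠ 0 := ne_of_gt hx.1
    have h1 : HasDerivAt (fun x : ℝ => x * Real.log x) (Real.log x + 1) x :=
      Real.hasDerivAt_mul_log hx0
    have h2 : HasDerivAt f (Real.log x + 1 - 1 + 0 - (2 * (1 - x) * (-1)) / 2) x := by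
      apply HasDerivAt.sub
      · simpa using (h1.sub (hasDerivAt_id x)).add_const 1
      · have : HasDerivAt (fun x : ℝ => (1 - x) ^ 2) (2 * (1 - x) ^ 1 * (0 - 1)) x :=
          ((hasDerivAt_const x 1).sub (hasDerivAt_id x)).pow 2
        simpa using this.div_const 2
    convert h2 using 1; ring
  have hanti : AntitoneOn f (Set.Icc 0 1) := by
    apply antitoneOn_of_deriv_nonpos (convex_Icc 0 1) hcont
    · intro x hx
      exact (hderiv x hx).differentiableAt.differentiableWithinAt
    · intro x hx
      rw [(hderiv x hx).deriv]
      rw [interior_Icc] at hx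
      nlinarith [Real.log_le_sub_one_of_pos hx.1]
  have := hanti (Set.mem_Icc.2 ⟨h0, h1⟩) (Set.mem_Icc.2 ⟨le_refl 0 |>.trans zero_le_one, le_refl 1⟩) h1
  simp only [hf] at this
  have hf1 : (1:ℝ) * Real.log 1 - 1 + 1 - (1 - 1) ^ 2 / 2 = 0 := by simp
  nlinarith

/-- Master pointwise inequality on the region where `|h| ≤ β`. -/
theorem st9_masterB (x r σ β : ℝ) (hx : 0 ≤ x) (hxβ : x ≤ β) (hr : 0 ≤ r) (hσ : 0 < σ) :
    x * |r - 1| ≤ σ * (r * Real.log r - r + 1)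
      + (Real.exp (β / σ) / σ + 1 / (2 * σ)) * x ^ 2 := by
  have hβ : 0 ≤ β := hx.trans hxβ
  have hexpσ : 0 < Real.exp (β / σ) := Real.exp_pos _
  have hell := st9_ell_nonneg r hr
  rcases le_or_gt 1 r with h1 | h1
  · rw [abs_of_nonneg (by linarith)]
    have hy : 0 ≤ x / σ := div_nonneg hx hσ.le
    have h2 := st9_young (x / σ) r hr
    have h3 := st9_exp_quad (x / σ) hy
    have h4 : Real.exp (x / σ) ≤ Real.exp (β / σ) :=
      Real.exp_le_exp.2 (by gcongr)
    have h5 : x / σ * (r - 1) ≤ (r * Real.log r - r + 1) + (x / σ) ^ 2 * Real.exp (β / σ) := by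
      nlinarith [sq_nonneg (x / σ)]
    have h6 : x * (r - 1) ≤ σ * (r * Real.log r - r + 1) + x ^ 2 / σ * Real.exp (β / σ) := by
      have := mul_le_mul_of_nonneg_left h5 hσ.le
      calc x * (r - 1) = σ * (x / σ * (r - 1)) := by field_simp
        _ ≤ σ * ((r * Real.log r - r + 1) + (x / σ) ^ 2 * Real.exp (β / σ)) := this
        _ = σ * (r * Real.log r - r + 1) + x ^ 2 / σ * Real.exp (β / σ) := by
            field_simp
    have : x ^ 2 / σ * Real.exp (β / σ) ≤ (Real.exp (β / σ) / σ + 1 / (2 * σ)) * x ^ 2 := by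
      rw [add_mul]
      have : x ^ 2 / σ * Real.exp (β / σ) = Real.exp (β / σ) / σ * x ^ 2 := by ring
      rw [this]
      have hpos : 0 ≤ 1 / (2 * σ) * x ^ 2 := by positivity
      linarith
    linarith
  · rw [abs_of_nonpos (by linarith)]
    have hsq := st9_sq_le_ell r hr h1.le
    have hAM : x * (1 - r) ≤ σ * (1 - r) ^ 2 / 2 + x ^ 2 / (2 * σ) := by
      rw [← sub_nonneg]
      have heq : σ * (1 - r) ^ 2 / 2 + x ^ 2 / (2 * σ) - x * (1 - r)
          = (σ * (1 - r) - x) ^ 2 / (2 * σ) := by field_simp; ring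
      rw [heq]; positivity
    have h7 : σ * (1 - r) ^ 2 / 2 ≤ σ * (r * Real.log r - r + 1) := by nlinarith
    have h8 : x ^ 2 / (2 * σ) ≤ (Real.exp (β / σ) / σ + 1 / (2 * σ)) * x ^ 2 := by
      rw [add_mul]
      have : x ^ 2 / (2 * σ) = 1 / (2 * σ) * x ^ 2 := by ring
      nlinarith [sq_nonneg x, div_nonneg (hexpσ.le) hσ.le, sq_nonneg x]
    have : -(r-1) = 1 - r := by ring
    rw [this]
    linarith

/-- Master pointwise inequality on the region where `β ≤ |h|`. -/
theorem st9_masterA (x r σ β : ℝ) (hβx : β ≤ x) (hr : 0 ≤ r) (hσ : 0 < σ) (hβ : 0 < β) :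
    x * |r - 1| ≤ (1/σ) * (r * Real.log r - r + 1)
      + (1/σ) * (Real.exp (σ * x) - 1) + (1/β) * x ^ 2 := by
  have hx : 0 ≤ x := hβ.le.trans hβx
  have habs : |r - 1| ≤ r + 1 := by
    rw [abs_le]; constructor <;> nlinarith [abs_nonneg (r-1)]
  have h1 := st9_young (σ * x) r hr
  have h2 : x * r ≤ (1/σ) * (r * Real.log r - r + 1) + (1/σ) * (Real.exp (σ * x) - 1) := by
    have := mul_le_mul_of_nonneg_left h1 (le_of_lt (by positivity : (0:ℝ) < 1/σ))
    calc x * r = (1/σ) * (σ * x * r) := by field_simp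
      _ ≤ (1/σ) * ((r * Real.log r - r + 1) + (Real.exp (σ * x) - 1)) := this
      _ = (1/σ) * (r * Real.log r - r + 1) + (1/σ) * (Real.exp (σ * x) - 1) := by ring
  have h3 : x * 1 ≤ (1/β) * x ^ 2 := by
    rw [mul_one, ← sub_nonneg]
    have heq : (1/β) * x ^ 2 - x = (x/β) * (x - β) := by field_simp
    rw [heq]
    exact mul_nonneg (div_nonneg hx hβ.le) (by linarith)
  have : x * |r - 1| ≤ x * (r + 1) := mul_le_mul_of_nonneg_left habs hx
  nlinarith

/-- for every `ε > 0` there is a compact `K_ε ⊂ Z` with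
`sup_{g ∈ S^Υ} ∫₀^T ∫_{Z∖K_ε} |h| |g − 1| dν ds ≤ ε`. -/
theorem statement9 {Z : Type*}
    [TopologicalSpace Z] [PolishSpace Z] [LocallyCompactSpace Z]
    [MeasurableSpace Z] [BorelSpace Z]
    (T : ℝ) (hT : 0 < T)
    (ν : Measure Z) [IsFiniteMeasureOnCompacts ν]
    (Υ : ℝ) (hΥ : 0 < Υ)
    (h : ℝ × Z → ℝ) (hmeas : Measurable h)
    (hL2 : ∫⁻ q, ENNReal.ofReal (|h q| ^ 2) ∂(nuT T ν) < ∞)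
    (hexp : ∀ δ > (0:ℝ), ∀ K : Set (ℝ × Z), MeasurableSet K → nuT T ν K < ∞ →
      ∫⁻ q in K, ENNReal.ofReal (Real.exp (δ * |h q|)) ∂(nuT T ν) < ∞) :
    ∀ ε > (0:ℝ), ∃ K : Set Z, IsCompact K ∧
      ∀ g ∈ entS (nuT T ν) Υ,
        (∫⁻ q in {q : ℝ × Z | q.2 ∉ K}, ENNReal.ofReal (|h q| * |g q - 1|) ∂(nuT T ν))
          ≤ ENNReal.ofReal ε := by
  intro ε hε
  set μ := nuT T ν with hμdef
  have habs : Measurable fun q : ℝ × Z => |h q| := hmeas.abs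
  have mh2 : Measurable fun q : ℝ × Z => ENNReal.ofReal (|h q| ^ 2) :=
    (habs.pow_const 2).ennreal_ofReal
  set σA : ℝ := 5 * Υ / ε with hσAdef
  have hσA : 0 < σA := by positivity
  set σB : ℝ := ε / (5 * Υ) with hσBdef
  have hσB : 0 < σB := by positivity
  have hε5 : (0:ℝ≥0∞) < ENNReal.ofReal (ε / 5) := ENNReal.ofReal_pos.2 (by positivity)
  have hε5' : (0:ℝ) ≤ ε / 5 := by positivity
  set L2 : ℝ≥0∞ := ∫⁻ q, ENNReal.ofReal (|h q| ^ 2) ∂μ with hL2def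
  set w : ℝ × Z → ℝ≥0∞ := fun q => ENNReal.ofReal (Real.exp (σA * |h q|) - 1) with hwdef
  have mw : Measurable w :=
    ((Real.measurable_exp.comp (measurable_const.mul habs)).sub measurable_const).ennreal_ofReal
  set S : ℕ → Set (ℝ × Z) := fun n => {q | (n:ℝ) < |h q|} with hSdef
  have hSmeas : ∀ n, MeasurableSet (S n) := fun n => measurableSet_lt measurable_const habs
  have hSanti : Antitone S := by
    intro a b hab q hq
    exact lt_of_le_of_lt ((Nat.cast_le (α := ℝ)).2 hab) hq
  have hS1fin : μ (S 1) < ∞ := by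
    have h1 : μ (S 1) = ∫⁻ _ in S 1, 1 ∂μ := (setLIntegral_one _).symm
    have h2 : ∫⁻ _ in S 1, (1:ℝ≥0∞) ∂μ ≤ ∫⁻ q in S 1, ENNReal.ofReal (|h q| ^ 2) ∂μ := by
      refine setLIntegral_mono mh2 fun q hq => ?_
      have hq0 : ((1:ℕ):ℝ) < |h q| := hq
      have hq' : (1:ℝ) < |h q| := by exact_mod_cast hq0
      exact ENNReal.one_le_ofReal.2 (by nlinarith)
    calc μ (S 1) = _ := h1
      _ ≤ _ := h2
      _ ≤ L2 := setLIntegral_le_lintegral _ _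
      _ < ∞ := hL2
  have hρ1fin : (μ.withDensity w) (S 1) ≠ ∞ := by
    rw [withDensity_apply _ (hSmeas 1)]
    have hle : ∫⁻ q in S 1, w q ∂μ
        ≤ ∫⁻ q in S 1, ENNReal.ofReal (Real.exp (σA * |h q|)) ∂μ :=
      setLIntegral_mono ((Real.measurable_exp.comp (measurable_const.mul habs)).ennreal_ofReal)
        fun q _ => ENNReal.ofReal_le_ofReal (sub_le_self _ zero_le_one)
    exact (hle.trans_lt (hexp σA hσA (S 1) (hSmeas 1) hS1fin)).ne
  have hT1 : Tendsto (fun n => (μ.withDensity w) (S n)) atTop (𝓝 0) := by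
    have hiInter : ⋂ k, S k = ∅ := by
      rw [Set.eq_empty_iff_forall_notMem]
      intro q hq
      obtain ⟨k, hk⟩ := exists_nat_gt (|h q|)
      have h2 : (k:ℝ) < |h q| := Set.mem_iInter.1 hq k
      linarith
    have hlim := tendsto_measure_iInter_atTop (μ := μ.withDensity w)
      (fun k => (hSmeas k).nullMeasurableSet) hSanti ⟨1, hρ1fin⟩
    rw [hiInter] at hlim
    simpa [Function.comp_def] using hlim
  have hT1' : Tendsto (fun n => ENNReal.ofReal (1/σA) * (μ.withDensity w) (S n)) atTop (𝓝 0) := by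
    have := ENNReal.Tendsto.const_mul (a := ENNReal.ofReal (1/σA)) hT1
      (Or.inr ENNReal.ofReal_ne_top)
    simpa using this
  have hT2 : Tendsto (fun n : ℕ => ENNReal.ofReal (1/(n:ℝ)) * L2) atTop (𝓝 0) := by
    have h0 : Tendsto (fun n : ℕ => ENNReal.ofReal (1/(n:ℝ))) atTop (𝓝 0) := by
      have := ENNReal.tendsto_ofReal (tendsto_one_div_atTop_nhds_zero_nat)
      simpa using this
    have := ENNReal.Tendsto.mul_const h0 (Or.inr hL2.ne)
    simpa using this
  obtain ⟨n, hn1, hn2, hn3⟩ : ∃ n : ℕ,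
      (ENNReal.ofReal (1/σA) * (μ.withDensity w) (S n) < ENNReal.ofReal (ε/5)) ∧
      (ENNReal.ofReal (1/(n:ℝ)) * L2 < ENNReal.ofReal (ε/5)) ∧ 1 ≤ n := by
    have e1 := (tendsto_order.1 hT1').2 _ hε5
    have e2 := (tendsto_order.1 hT2).2 _ hε5
    obtain ⟨k, hk⟩ := ((e1.and e2).and (eventually_ge_atTop 1)).exists
    exact ⟨k, hk.1.1, hk.1.2, hk.2⟩
  have hβpos : (0:ℝ) < (n:ℝ) := by exact_mod_cast hn3
  set Cc : ℝ := Real.exp ((n:ℝ)/σB)/σB + 1/(2*σB) with hCcdef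
  have hCc : 0 < Cc := by positivity
  set KK : ℕ → Set Z := compactCovering Z with hKKdef
  set S' : ℕ → Set (ℝ × Z) := fun m => {q | q.2 ∉ KK m} with hS'def
  have hS'meas : ∀ m, MeasurableSet (S' m) := fun m =>
    measurable_snd ((isCompact_compactCovering Z m).isClosed.measurableSet.compl)
  have hS'anti : Antitone S' := fun a b hab q hq hmem =>
    hq (compactCovering_subset Z hab hmem)
  set ρ2 := μ.withDensity fun q => ENNReal.ofReal (|h q| ^ 2) with hρ2def
  have hρ2fin : ∀ m, ρ2 (S' m) ≠ ∞ := fun m => by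
    rw [hρ2def, withDensity_apply _ (hS'meas m)]
    exact ((setLIntegral_le_lintegral _ _).trans_lt hL2).ne
  have hT3 : Tendsto (fun m => ρ2 (S' m)) atTop (𝓝 0) := by
    have hiInter : ⋂ k, S' k = ∅ := by
      rw [Set.eq_empty_iff_forall_notMem]
      intro q hq
      have hq2 : q.2 ∈ ⋃ k, KK k := by rw [hKKdef, iUnion_compactCovering]; trivial
      obtain ⟨k, hk⟩ := Set.mem_iUnion.1 hq2
      exact (Set.mem_iInter.1 hq k) hk
    have hlim := tendsto_measure_iInter_atTop (μ := ρ2)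
      (fun k => (hS'meas k).nullMeasurableSet) hS'anti ⟨0, hρ2fin 0⟩
    rw [hiInter] at hlim
    simpa [Function.comp_def] using hlim
  have hT3' : Tendsto (fun m => ENNReal.ofReal Cc * ρ2 (S' m)) atTop (𝓝 0) := by
    have := ENNReal.Tendsto.const_mul (a := ENNReal.ofReal Cc) hT3 (Or.inr ENNReal.ofReal_ne_top)
    simpa using this
  obtain ⟨m, hm⟩ := ((tendsto_order.1 hT3').2 _ hε5).exists
  refine ⟨KK m, isCompact_compactCovering Z m, ?_⟩
  rintro g ⟨hgm, hgnn, hgint⟩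
  have mℓg : Measurable fun q : ℝ × Z => g q * Real.log (g q) - g q + 1 :=
    ((hgm.mul (Real.measurable_log.comp hgm)).sub hgm).add measurable_const
  -- the B region
  set Bs : Set (ℝ × Z) := {q | q.2 ∉ KK m} ∩ {q | |h q| ≤ (n:ℝ)} with hBsdef
  -- split
  have hsplit : (∫⁻ q in {q : ℝ × Z | q.2 ∉ KK m}, ENNReal.ofReal (|h q| * |g q - 1|) ∂μ)
      ≤ (∫⁻ q in S n, ENNReal.ofReal (|h q| * |g q - 1|) ∂μ)
        + ∫⁻ q in Bs, ENNReal.ofReal (|h q| * |g q - 1|) ∂μ := by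
    refine le_trans (lintegral_mono_set ?_) (lintegral_union_le _ _ _)
    intro q hq
    rcases lt_or_ge ((n:ℝ)) (|h q|) with hc | hc
    · exact Or.inl hc
    · exact Or.inr ⟨hq, hc⟩
  -- A bound
  have hA : (∫⁻ q in S n, ENNReal.ofReal (|h q| * |g q - 1|) ∂μ)
      ≤ ENNReal.ofReal (ε/5) + ENNReal.ofReal (ε/5) + ENNReal.ofReal (ε/5) := by
    have m1 : Measurable fun q : ℝ × Z =>
        ENNReal.ofReal ((1/σA) * (g q * Real.log (g q) - g q + 1)) :=
      (measurable_const.mul mℓg).ennreal_ofReal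
    have m2 : Measurable fun q : ℝ × Z =>
        ENNReal.ofReal ((1/σA) * (Real.exp (σA * |h q|) - 1)) :=
      (measurable_const.mul
        ((Real.measurable_exp.comp (measurable_const.mul habs)).sub measurable_const)).ennreal_ofReal
    have m3 : Measurable fun q : ℝ × Z => ENNReal.ofReal ((1/(n:ℝ)) * |h q| ^ 2) :=
      (measurable_const.mul (habs.pow_const 2)).ennreal_ofReal
    have hpt : ∀ q ∈ S n, ENNReal.ofReal (|h q| * |g q - 1|)
        ≤ ENNReal.ofReal ((1/σA) * (g q * Real.log (g q) - g q + 1))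
          + ENNReal.ofReal ((1/σA) * (Real.exp (σA * |h q|) - 1))
          + ENNReal.ofReal ((1/(n:ℝ)) * |h q| ^ 2) := by
      intro q hq
      have hq' : (n:ℝ) < |h q| := hq
      have hM := st9_masterA (|h q|) (g q) σA (n:ℝ) hq'.le (hgnn q) hσA hβpos
      have ht1 : 0 ≤ (1/σA) * (g q * Real.log (g q) - g q + 1) :=
        mul_nonneg (by positivity) (st9_ell_nonneg _ (hgnn q))
      have ht2 : 0 ≤ (1/σA) * (Real.exp (σA * |h q|) - 1) := by
        have h1e : (1:ℝ) ≤ Real.exp (σA * |h q|) :=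
          Real.one_le_exp (by positivity)
        have h1σ : (0:ℝ) ≤ 1/σA := by positivity
        nlinarith
      have ht3 : 0 ≤ (1/(n:ℝ)) * |h q| ^ 2 := by positivity
      calc ENNReal.ofReal (|h q| * |g q - 1|)
          ≤ ENNReal.ofReal ((1/σA) * (g q * Real.log (g q) - g q + 1)
              + (1/σA) * (Real.exp (σA * |h q|) - 1) + (1/(n:ℝ)) * |h q| ^ 2) :=
            ENNReal.ofReal_le_ofReal hM
        _ = _ := by
            rw [ENNReal.ofReal_add (by linarith) ht3, ENNReal.ofReal_add ht1 ht2]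
    have b1 : (∫⁻ q in S n,
        ENNReal.ofReal ((1/σA) * (g q * Real.log (g q) - g q + 1)) ∂μ) ≤ ENNReal.ofReal (ε/5) := by
      have heq : (∫⁻ q in S n,
          ENNReal.ofReal ((1/σA) * (g q * Real.log (g q) - g q + 1)) ∂μ)
          = ENNReal.ofReal (1/σA)
            * ∫⁻ q in S n, ENNReal.ofReal (g q * Real.log (g q) - g q + 1) ∂μ := by
        simp_rw [ENNReal.ofReal_mul (le_of_lt (by positivity : (0:ℝ) < 1/σA))]
        exact lintegral_const_mul' _ _ ENNReal.ofReal_ne_top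
      rw [heq]
      calc ENNReal.ofReal (1/σA) * ∫⁻ q in S n, ENNReal.ofReal (g q * Real.log (g q) - g q + 1) ∂μ
          ≤ ENNReal.ofReal (1/σA) * ENNReal.ofReal Υ :=
            mul_le_mul_right ((setLIntegral_le_lintegral _ _).trans hgint) _
        _ = ENNReal.ofReal ((1/σA) * Υ) :=
            (ENNReal.ofReal_mul (le_of_lt (by positivity))).symm
        _ ≤ ENNReal.ofReal (ε/5) := by
            refine ENNReal.ofReal_le_ofReal (le_of_eq ?_)
            rw [hσAdef]
            field_simp
    have b2 : (∫⁻ q in S n,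
        ENNReal.ofReal ((1/σA) * (Real.exp (σA * |h q|) - 1)) ∂μ) ≤ ENNReal.ofReal (ε/5) := by
      have heq : (∫⁻ q in S n, ENNReal.ofReal ((1/σA) * (Real.exp (σA * |h q|) - 1)) ∂μ)
          = ENNReal.ofReal (1/σA) * ∫⁻ q in S n, w q ∂μ := by
        simp_rw [ENNReal.ofReal_mul (le_of_lt (by positivity : (0:ℝ) < 1/σA))]
        exact lintegral_const_mul' _ _ ENNReal.ofReal_ne_top
      rw [heq, ← withDensity_apply _ (hSmeas n)]
      exact hn1.le
    have b3 : (∫⁻ q in S n, ENNReal.ofReal ((1/(n:ℝ)) * |h q| ^ 2) ∂μ)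
        ≤ ENNReal.ofReal (ε/5) := by
      have heq : (∫⁻ q in S n, ENNReal.ofReal ((1/(n:ℝ)) * |h q| ^ 2) ∂μ)
          = ENNReal.ofReal (1/(n:ℝ)) * ∫⁻ q in S n, ENNReal.ofReal (|h q| ^ 2) ∂μ := by
        simp_rw [ENNReal.ofReal_mul (le_of_lt (by positivity : (0:ℝ) < 1/(n:ℝ)))]
        exact lintegral_const_mul' _ _ ENNReal.ofReal_ne_top
      rw [heq]
      calc ENNReal.ofReal (1/(n:ℝ)) * ∫⁻ q in S n, ENNReal.ofReal (|h q| ^ 2) ∂μ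
          ≤ ENNReal.ofReal (1/(n:ℝ)) * L2 :=
            mul_le_mul_right (setLIntegral_le_lintegral _ _) _
        _ ≤ ENNReal.ofReal (ε/5) := hn2.le
    calc (∫⁻ q in S n, ENNReal.ofReal (|h q| * |g q - 1|) ∂μ)
        ≤ ∫⁻ q in S n, (ENNReal.ofReal ((1/σA) * (g q * Real.log (g q) - g q + 1))
            + ENNReal.ofReal ((1/σA) * (Real.exp (σA * |h q|) - 1))
            + ENNReal.ofReal ((1/(n:ℝ)) * |h q| ^ 2)) ∂μ :=
          setLIntegral_mono ((m1.add m2).add m3) hpt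
      _ = (∫⁻ q in S n, (ENNReal.ofReal ((1/σA) * (g q * Real.log (g q) - g q + 1))
            + ENNReal.ofReal ((1/σA) * (Real.exp (σA * |h q|) - 1))) ∂μ)
            + ∫⁻ q in S n, ENNReal.ofReal ((1/(n:ℝ)) * |h q| ^ 2) ∂μ :=
          lintegral_add_right _ m3
      _ = (∫⁻ q in S n, ENNReal.ofReal ((1/σA) * (g q * Real.log (g q) - g q + 1)) ∂μ)
            + (∫⁻ q in S n, ENNReal.ofReal ((1/σA) * (Real.exp (σA * |h q|) - 1)) ∂μ)
            + ∫⁻ q in S n, ENNReal.ofReal ((1/(n:ℝ)) * |h q| ^ 2) ∂μ := by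
          rw [lintegral_add_right _ m2]
      _ ≤ ENNReal.ofReal (ε/5) + ENNReal.ofReal (ε/5) + ENNReal.ofReal (ε/5) :=
          add_le_add (add_le_add b1 b2) b3
  -- B bound
  have hB : (∫⁻ q in Bs, ENNReal.ofReal (|h q| * |g q - 1|) ∂μ)
      ≤ ENNReal.ofReal (ε/5) + ENNReal.ofReal (ε/5) := by
    have m4 : Measurable fun q : ℝ × Z =>
        ENNReal.ofReal (σB * (g q * Real.log (g q) - g q + 1)) :=
      (measurable_const.mul mℓg).ennreal_ofReal
    have m5 : Measurable fun q : ℝ × Z => ENNReal.ofReal (Cc * |h q| ^ 2) :=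
      (measurable_const.mul (habs.pow_const 2)).ennreal_ofReal
    have hpt : ∀ q ∈ Bs, ENNReal.ofReal (|h q| * |g q - 1|)
        ≤ ENNReal.ofReal (σB * (g q * Real.log (g q) - g q + 1))
          + ENNReal.ofReal (Cc * |h q| ^ 2) := by
      rintro q ⟨_, hq2⟩
      have hq2' : |h q| ≤ (n:ℝ) := hq2
      have hM := st9_masterB (|h q|) (g q) σB (n:ℝ) (abs_nonneg _) hq2' (hgnn q) hσB
      have ht4 : 0 ≤ σB * (g q * Real.log (g q) - g q + 1) :=
        mul_nonneg hσB.le (st9_ell_nonneg _ (hgnn q))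
      calc ENNReal.ofReal (|h q| * |g q - 1|)
          ≤ ENNReal.ofReal (σB * (g q * Real.log (g q) - g q + 1) + Cc * |h q| ^ 2) := by
            refine ENNReal.ofReal_le_ofReal ?_
            calc |h q| * |g q - 1|
                ≤ σB * (g q * Real.log (g q) - g q + 1)
                  + (Real.exp ((n:ℝ)/σB)/σB + 1/(2*σB)) * |h q| ^ 2 := hM
              _ = σB * (g q * Real.log (g q) - g q + 1) + Cc * |h q| ^ 2 := by rw [hCcdef]
        _ = _ := ENNReal.ofReal_add ht4 (by positivity)
    have b4 : (∫⁻ q in Bs,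
        ENNReal.ofReal (σB * (g q * Real.log (g q) - g q + 1)) ∂μ) ≤ ENNReal.ofReal (ε/5) := by
      have heq : (∫⁻ q in Bs, ENNReal.ofReal (σB * (g q * Real.log (g q) - g q + 1)) ∂μ)
          = ENNReal.ofReal σB
            * ∫⁻ q in Bs, ENNReal.ofReal (g q * Real.log (g q) - g q + 1) ∂μ := by
        simp_rw [ENNReal.ofReal_mul hσB.le]
        exact lintegral_const_mul' _ _ ENNReal.ofReal_ne_top
      rw [heq]
      calc ENNReal.ofReal σB * ∫⁻ q in Bs, ENNReal.ofReal (g q * Real.log (g q) - g q + 1) ∂μ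
          ≤ ENNReal.ofReal σB * ENNReal.ofReal Υ :=
            mul_le_mul_right ((setLIntegral_le_lintegral _ _).trans hgint) _
        _ = ENNReal.ofReal (σB * Υ) := (ENNReal.ofReal_mul hσB.le).symm
        _ ≤ ENNReal.ofReal (ε/5) := by
            refine ENNReal.ofReal_le_ofReal (le_of_eq ?_)
            rw [hσBdef]
            field_simp
    have b5 : (∫⁻ q in Bs, ENNReal.ofReal (Cc * |h q| ^ 2) ∂μ) ≤ ENNReal.ofReal (ε/5) := by
      have heq : (∫⁻ q in Bs, ENNReal.ofReal (Cc * |h q| ^ 2) ∂μ)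
          = ENNReal.ofReal Cc * ∫⁻ q in Bs, ENNReal.ofReal (|h q| ^ 2) ∂μ := by
        simp_rw [ENNReal.ofReal_mul hCc.le]
        exact lintegral_const_mul' _ _ ENNReal.ofReal_ne_top
      rw [heq]
      calc ENNReal.ofReal Cc * ∫⁻ q in Bs, ENNReal.ofReal (|h q| ^ 2) ∂μ
          ≤ ENNReal.ofReal Cc * ∫⁻ q in S' m, ENNReal.ofReal (|h q| ^ 2) ∂μ :=
            mul_le_mul_right (lintegral_mono_set Set.inter_subset_left) _
        _ = ENNReal.ofReal Cc * ρ2 (S' m) := by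
            rw [hρ2def, withDensity_apply _ (hS'meas m)]
        _ ≤ ENNReal.ofReal (ε/5) := hm.le
    calc (∫⁻ q in Bs, ENNReal.ofReal (|h q| * |g q - 1|) ∂μ)
        ≤ ∫⁻ q in Bs, (ENNReal.ofReal (σB * (g q * Real.log (g q) - g q + 1))
            + ENNReal.ofReal (Cc * |h q| ^ 2)) ∂μ :=
          setLIntegral_mono (m4.add m5) hpt
      _ = (∫⁻ q in Bs, ENNReal.ofReal (σB * (g q * Real.log (g q) - g q + 1)) ∂μ)
            + ∫⁻ q in Bs, ENNReal.ofReal (Cc * |h q| ^ 2) ∂μ :=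
          lintegral_add_right _ m5
      _ ≤ ENNReal.ofReal (ε/5) + ENNReal.ofReal (ε/5) := add_le_add b4 b5
  calc (∫⁻ q in {q : ℝ × Z | q.2 ∉ KK m}, ENNReal.ofReal (|h q| * |g q - 1|) ∂μ)
      ≤ (ENNReal.ofReal (ε/5) + ENNReal.ofReal (ε/5) + ENNReal.ofReal (ε/5))
        + (ENNReal.ofReal (ε/5) + ENNReal.ofReal (ε/5)) :=
        hsplit.trans (add_le_add hA hB)
    _ = ENNReal.ofReal ε := by
        rw [← ENNReal.ofReal_add hε5' hε5', ← ENNReal.ofReal_add (by linarith) hε5',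
          ← ENNReal.ofReal_add (by linarith) (by linarith)]
        congr 1
        ring
end

section
/- Fix Υ > 0. For every ε > 0 there exists δ > 0 such that for every measurable set K ⊆ [0,T] with λ_T(K) < δ, sup_{g ∈ S^Υ} ∫_K ∫_Z |h(s,z)| |g(s,z) − 1| ν(dz) ds ≤ ε. -/
open MeasureTheory Filter Topology
open scoped ENNReal

lemma st10_aux_exp (b c : ℝ) (hb : 0 ≤ b) : b * (c - Real.log b + 1) ≤ Real.exp c := by
  rcases hb.eq_or_lt with h0 | h0
  · rw [← h0]; simpa using (Real.exp_pos c).le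
  · have h1 := Real.add_one_le_exp (c - Real.log b)
    have h2 : b * Real.exp (c - Real.log b) = Real.exp c := by
      rw [Real.exp_sub, Real.exp_log h0]; field_simp
    calc b * (c - Real.log b + 1) ≤ b * Real.exp (c - Real.log b) := by
          apply mul_le_mul_of_nonneg_left _ h0.le; linarith
      _ = Real.exp c := h2

lemma st10_young (x b : ℝ) (hb : 0 ≤ b) :
    x * |b - 1| ≤ (b * Real.log b - b + 1) + (Real.exp x + Real.exp (-x) - 2) := by
  have e1 := Real.add_one_le_exp x
  have e2 := Real.add_one_le_exp (-x)
  rcases le_or_gt 1 b with h1 | h1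
  · rw [abs_of_nonneg (by linarith)]
    have h3 := st10_aux_exp b x hb
    nlinarith
  · rw [abs_of_nonpos (by linarith)]
    have h3 := st10_aux_exp b (-x) hb
    nlinarith

/-- for every `ε > 0` there is `δ > 0` such that for every measurable
`K ⊆ [0,T]` with `λ_T(K) < δ`,
`sup_{g ∈ S^Υ} ∫_K ∫_Z |h(s,z)| |g(s,z) − 1| ν(dz) ds ≤ ε`. -/
theorem statement10 {Z : Type*}
    [TopologicalSpace Z] [PolishSpace Z] [LocallyCompactSpace Z]
    [MeasurableSpace Z] [BorelSpace Z]
    (T : ℝ) (hT : 0 < T)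
    (ν : Measure Z) [IsFiniteMeasureOnCompacts ν]
    (Υ : ℝ) (hΥ : 0 < Υ)
    (h : ℝ × Z → ℝ) (hmeas : Measurable h)
    (hL2 : ∫⁻ q, ENNReal.ofReal (|h q| ^ 2) ∂(nuT T ν) < ∞)
    (hexp : ∀ δ > (0:ℝ), ∀ K : Set (ℝ × Z), MeasurableSet K → nuT T ν K < ∞ →
      ∫⁻ q in K, ENNReal.ofReal (Real.exp (δ * |h q|)) ∂(nuT T ν) < ∞) :
    ∀ ε > (0:ℝ), ∃ δ > (0:ℝ), ∀ K : Set ℝ,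
      MeasurableSet K → K ⊆ Set.Icc 0 T → volume K < ENNReal.ofReal δ →
      ∀ g ∈ entS (nuT T ν) Υ,
        (∫⁻ q in K ×ˢ (Set.univ : Set Z), ENNReal.ofReal (|h q| * |g q - 1|) ∂(nuT T ν))
          ≤ ENNReal.ofReal ε := by
  haveI : SigmaFinite ν := inferInstance
  intro ε hε
  set σ : ℝ := 2 * Υ / ε with hσdef
  have hσ : 0 < σ := by positivity
  set W : ℝ × Z → ℝ := fun q => Real.exp (σ * |h q|) + Real.exp (-(σ * |h q|)) - 2 with hWdef
  have hWmeas : Measurable W := (((hmeas.abs.const_mul σ).exp).add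
    ((hmeas.abs.const_mul σ).neg.exp)).sub measurable_const
  -- the exceptional set
  set B : Set (ℝ × Z) := {q | 1 < σ * |h q|} with hBdef
  have hBmeas : MeasurableSet B := measurableSet_lt measurable_const (hmeas.abs.const_mul σ)
  have hh2meas : Measurable fun q => ENNReal.ofReal (|h q| ^ 2) :=
    (hmeas.abs.pow_const 2).ennreal_ofReal
  have hBfin : nuT T ν B < ∞ := by
    have step : nuT T ν B ≤ ∫⁻ q, ENNReal.ofReal (σ ^ 2) * ENNReal.ofReal (|h q| ^ 2)
        ∂(nuT T ν) := by
      rw [← setLIntegral_one B]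
      refine le_trans (setLIntegral_mono (measurable_const.mul hh2meas) ?_)
        (setLIntegral_le_lintegral _ _)
      intro q hq
      simp only [Pi.mul_apply]
      rw [← ENNReal.ofReal_mul (by positivity), ← ENNReal.ofReal_one]
      apply ENNReal.ofReal_le_ofReal
      have hq' : 1 < σ * |h q| := hq
      nlinarith [abs_nonneg (h q)]
    rw [lintegral_const_mul _ hh2meas] at step
    exact lt_of_le_of_lt step (ENNReal.mul_lt_top ENNReal.ofReal_lt_top hL2)
  have hexpB := hexp σ hσ B hBmeas hBfin
  -- finiteness of the integral of W
  have hWfin : ∫⁻ q, ENNReal.ofReal (W q) ∂(nuT T ν) < ∞ := by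
    have hpt : ∀ q, ENNReal.ofReal (W q) ≤
        ENNReal.ofReal (2 * σ ^ 2) * ENNReal.ofReal (|h q| ^ 2) +
          B.indicator (fun q => ENNReal.ofReal (Real.exp (σ * |h q|))) q := by
      intro q
      rcases le_or_gt (σ * |h q|) 1 with hq | hq
      · have hx0 : 0 ≤ σ * |h q| := by positivity
        have hx1 : abs (σ * |h q|) ≤ 1 := by rw [abs_of_nonneg hx0]; exact hq
        have e1 := Real.abs_exp_sub_one_sub_id_le hx1
        have hx1' : abs (-(σ * |h q|)) ≤ 1 := by rwa [abs_neg]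
        have e2 := Real.abs_exp_sub_one_sub_id_le hx1'
        rw [abs_le] at e1 e2
        have hW : W q ≤ 2 * σ ^ 2 * |h q| ^ 2 := by
          have : (-(σ * |h q|)) ^ 2 = (σ * |h q|) ^ 2 := by ring
          rw [this] at e2
          simp only [hWdef]
          nlinarith [e1.2, e2.2]
        refine le_trans (ENNReal.ofReal_le_ofReal hW) ?_
        rw [ENNReal.ofReal_mul (by positivity : (0:ℝ) ≤ 2 * σ ^ 2)]
        exact le_self_add
      · have hqB : q ∈ B := hq
        rw [Set.indicator_of_mem hqB]
        have hW : W q ≤ Real.exp (σ * |h q|) := by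
          have := Real.exp_le_one_iff.mpr (by linarith [mul_nonneg hσ.le (abs_nonneg (h q))] :
            -(σ * |h q|) ≤ 0)
          simp only [hWdef]
          linarith
        exact le_trans (ENNReal.ofReal_le_ofReal hW) le_add_self
    calc ∫⁻ q, ENNReal.ofReal (W q) ∂(nuT T ν)
        ≤ ∫⁻ q, (ENNReal.ofReal (2 * σ ^ 2) * ENNReal.ofReal (|h q| ^ 2) +
            B.indicator (fun q => ENNReal.ofReal (Real.exp (σ * |h q|))) q) ∂(nuT T ν) :=
          lintegral_mono hpt
      _ = ENNReal.ofReal (2 * σ ^ 2) * ∫⁻ q, ENNReal.ofReal (|h q| ^ 2) ∂(nuT T ν) +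
            ∫⁻ q in B, ENNReal.ofReal (Real.exp (σ * |h q|)) ∂(nuT T ν) := by
          rw [lintegral_add_left (hh2meas.const_mul (ENNReal.ofReal (2 * σ ^ 2)))]
          congr 1
          · exact lintegral_const_mul _ hh2meas
          · exact lintegral_indicator hBmeas _
      _ < ∞ := ENNReal.add_lt_top.mpr
          ⟨ENNReal.mul_lt_top ENNReal.ofReal_lt_top hL2, hexpB⟩
  -- absolute continuity via Fubini
  set μ₀ : Measure ℝ := volume.restrict (Set.Icc (0:ℝ) T) with hμ₀def
  have hWae : AEMeasurable (fun q => ENNReal.ofReal (W q)) (μ₀.prod ν) :=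
    hWmeas.ennreal_ofReal.aemeasurable
  have hFfin : ∫⁻ s, (∫⁻ z, ENNReal.ofReal (W (s, z)) ∂ν) ∂μ₀ ≠ ∞ := by
    rw [← MeasureTheory.lintegral_prod _ hWae]
    exact hWfin.ne
  obtain ⟨δ', hδ'pos, hδ'⟩ := exists_pos_setLIntegral_lt_of_measure_lt hFfin
    (ε := ENNReal.ofReal Υ) (by simp [hΥ, ENNReal.ofReal_pos.mpr hΥ |>.ne'])
  obtain ⟨c, hc0, hcδ'⟩ := exists_between hδ'pos
  have hcne : c ≠ ∞ := (lt_of_lt_of_le hcδ' le_top).ne_top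
  refine ⟨c.toReal, ENNReal.toReal_pos hc0.ne' hcne, ?_⟩
  intro K hKmeas hKsub hKvol g hg
  obtain ⟨hgmeas, hg0, hgent⟩ := hg
  -- smallness of the W-integral over K × Z
  have hKW : ∫⁻ q in K ×ˢ (Set.univ : Set Z), ENNReal.ofReal (W q) ∂(nuT T ν)
      ≤ ENNReal.ofReal Υ := by
    have hres : (nuT T ν).restrict (K ×ˢ (Set.univ : Set Z)) = (μ₀.restrict K).prod ν := by
      rw [nuT, ← hμ₀def, ← Measure.prod_restrict, Measure.restrict_univ]
    rw [hres, MeasureTheory.lintegral_prod _ hWmeas.ennreal_ofReal.aemeasurable]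
    have hKμ₀ : μ₀ K < δ' := by
      have h1 : μ₀ K ≤ volume K := by
        rw [hμ₀def, Measure.restrict_apply hKmeas]
        exact measure_mono Set.inter_subset_left
      calc μ₀ K ≤ volume K := h1
        _ < ENNReal.ofReal c.toReal := hKvol
        _ ≤ c := ENNReal.ofReal_toReal_le
        _ < δ' := hcδ'
    exact (hδ' K hKμ₀).le
  -- measurability
  have hgl : Measurable fun q : ℝ × Z =>
      ENNReal.ofReal (g q * Real.log (g q) - g q + 1) :=
    (((hgmeas.mul (Real.measurable_log.comp hgmeas)).sub hgmeas).add
      measurable_const).ennreal_ofReal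
  have hfmeas : Measurable fun q : ℝ × Z => ENNReal.ofReal (|h q| * |g q - 1|) :=
    (hmeas.abs.mul (hgmeas.sub measurable_const).abs).ennreal_ofReal
  -- pointwise key inequality
  have key : ∀ q : ℝ × Z, ENNReal.ofReal σ * ENNReal.ofReal (|h q| * |g q - 1|) ≤
      ENNReal.ofReal (g q * Real.log (g q) - g q + 1) + ENNReal.ofReal (W q) := by
    intro q
    rw [← ENNReal.ofReal_mul hσ.le]
    refine le_trans (ENNReal.ofReal_le_ofReal ?_) ENNReal.ofReal_add_le
    have hy := st10_young (σ * |h q|) (g q) (hg0 q)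
    calc σ * (|h q| * |g q - 1|) = (σ * |h q|) * |g q - 1| := by ring
      _ ≤ _ := hy
  have hσε : ENNReal.ofReal Υ + ENNReal.ofReal Υ = ENNReal.ofReal σ * ENNReal.ofReal ε := by
    rw [← ENNReal.ofReal_add hΥ.le hΥ.le, ← ENNReal.ofReal_mul hσ.le]
    congr 1
    rw [hσdef]
    field_simp
    ring
  have main : ENNReal.ofReal σ *
      ∫⁻ q in K ×ˢ (Set.univ : Set Z), ENNReal.ofReal (|h q| * |g q - 1|) ∂(nuT T ν)
      ≤ ENNReal.ofReal σ * ENNReal.ofReal ε := by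
    rw [← lintegral_const_mul _ hfmeas]
    calc ∫⁻ q in K ×ˢ (Set.univ : Set Z),
          ENNReal.ofReal σ * ENNReal.ofReal (|h q| * |g q - 1|) ∂(nuT T ν)
        ≤ ∫⁻ q in K ×ˢ (Set.univ : Set Z),
            (ENNReal.ofReal (g q * Real.log (g q) - g q + 1) + ENNReal.ofReal (W q))
            ∂(nuT T ν) := lintegral_mono fun q => key q
      _ = (∫⁻ q in K ×ˢ (Set.univ : Set Z),
            ENNReal.ofReal (g q * Real.log (g q) - g q + 1) ∂(nuT T ν)) +
          ∫⁻ q in K ×ˢ (Set.univ : Set Z), ENNReal.ofReal (W q) ∂(nuT T ν) :=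
        lintegral_add_left hgl _
      _ ≤ ENNReal.ofReal Υ + ENNReal.ofReal Υ :=
        add_le_add ((setLIntegral_le_lintegral _ _).trans hgent) hKW
      _ = ENNReal.ofReal σ * ENNReal.ofReal ε := hσε
  exact (ENNReal.mul_le_mul_iff_right (ENNReal.ofReal_pos.mpr hσ).ne'
    ENNReal.ofReal_ne_top).mp main
end
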